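/- Let I ⊆ ℂ[X] = ℂ[x₁,…,x_n] be an ideal, F ∈ ℂ[T] squarefree, and r = x_n + Σ_{i=1}^{n-1} aᵢxᵢ with a₁,…,a_{n-1} ∈ ℂ, such that deg(F) = dim_ℂ(ℂ[X]/I) = d (finite), F(r) ∈ I, and no proper factor of F(r) is in I. Let λ : ℂ[X]/I → ℂ[X]/I be multiplication by r. Then the zeros of F are exactly the eigenvalues of λ; if λ₁,…,λ_d are the (pairwise distinct) eigenvalues of λ, then I = ⋂_{i=1}^{d} ⟨I, r − λᵢ⟩, and ⟨I, r − λᵢ⟩ is a maximal ideal of ℂ[X] for each i = 1,…,d. -/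

import Mathlib

open MvPolynomial

private lemma aux_mulLeft_lmul {R A : Type*} [CommSemiring R] [CommSemiring A] [Algebra R A]
    (x : A) : LinearMap.mulLeft R x = Algebra.lmul R A x := rfl

private lemma aux_aeval_mulLeft {R A : Type*} [CommRing R] [CommRing A] [Algebra R A] (x : A)
    (H : Polynomial R) :
    Polynomial.aeval (LinearMap.mulLeft R x : Module.End R A) H
      = LinearMap.mulLeft R (Polynomial.aeval x H) := by
  rw [aux_mulLeft_lmul, Polynomial.aeval_algHom_apply, aux_mulLeft_lmul]

private lemma aux_inf_eq_prod {R : Type*} [CommRing R] {ι : Type*} (s : Finset ι)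
    (J : ι → Ideal R) (h : ∀ i ∈ s, ∀ j ∈ s, i ≠ j → IsCoprime (J i) (J j)) :
    s.inf J = ∏ i ∈ s, J i := by
  classical
  induction s using Finset.cons_induction with
  | empty => simp
  | cons a s ha ih =>
    rw [Finset.inf_cons, Finset.prod_cons,
      ← ih (fun i hi j hj hij => h i (Finset.mem_cons_of_mem hi) j (Finset.mem_cons_of_mem hj) hij)]
    have hcop : IsCoprime (J a) (∏ i ∈ s, J i) :=
      IsCoprime.prod_right fun i hi =>
        h a (Finset.mem_cons_self a s) i (Finset.mem_cons_of_mem hi)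
          (by rintro rfl; exact ha hi)
    rw [ih (fun i hi j hj hij => h i (Finset.mem_cons_of_mem hi) j (Finset.mem_cons_of_mem hj) hij)]
    exact (Ideal.mul_eq_inf_of_coprime hcop.sup_eq).symm

private lemma aux_prod_sup_le {R : Type*} [CommRing R] {ι : Type*} (s : Finset ι)
    (I : Ideal R) (P : ι → Ideal R) :
    (∏ i ∈ s, (I ⊔ P i)) ≤ I ⊔ ∏ i ∈ s, P i := by
  classical
  induction s using Finset.cons_induction with
  | empty => simp
  | cons a s ha ih =>
    rw [Finset.prod_cons, Finset.prod_cons]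
    calc (I ⊔ P a) * ∏ i ∈ s, (I ⊔ P i) ≤ (I ⊔ P a) * (I ⊔ ∏ i ∈ s, P i) :=
          Ideal.mul_mono_right ih
    _ ≤ I ⊔ P a * ∏ i ∈ s, P i := by
        rw [Ideal.sup_mul, Ideal.mul_sup, Ideal.mul_sup]
        refine sup_le (sup_le ?_ ?_) (sup_le ?_ ?_)
        · exact le_sup_of_le_left Ideal.mul_le_right
        · exact le_sup_of_le_left Ideal.mul_le_left
        · exact le_sup_of_le_left Ideal.mul_le_right
        · exact le_sup_right

private lemma aux_smul_mk {K R : Type*} [CommSemiring K] [CommRing R] [Algebra K R]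
    (I : Ideal R) (c : K) (x : R ⧸ I) :
    c • x = Ideal.Quotient.mk I (algebraMap K R c) * x := by
  rw [Ideal.Quotient.mk_algebraMap, ← Algebra.smul_def]

private lemma aux_fin_quot {K R : Type*} [Field K] [CommRing R] [Algebra K R]
    {I J : Ideal R} (h : I ≤ J) [hfin : Module.Finite K (R ⧸ I)] : Module.Finite K (R ⧸ J) := by
  have hmk : ∀ y : R, Ideal.Quotient.factor h (Ideal.Quotient.mk I y)
      = Ideal.Quotient.mk J y := fun y => Ideal.Quotient.factor_mk h y
  let f : (R ⧸ I) →ₗ[K] (R ⧸ J) :=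
    { toFun := Ideal.Quotient.factor h,
      map_add' := fun x y => map_add _ x y,
      map_smul' := by
        intro c x
        simp only [RingHom.id_apply]
        rw [Algebra.smul_def, Algebra.smul_def, map_mul]
        congr 1 }
  refine Module.Finite.of_surjective f fun x => ?_
  obtain ⟨y, rfl⟩ := Ideal.Quotient.mk_surjective x
  exact ⟨Ideal.Quotient.mk I y, hmk y⟩

private lemma aux_crt_finrank {K R : Type*} [Field K] [CommRing R] [Algebra K R]
    {d : ℕ} (J : Fin d → Ideal R) (hcop : Pairwise (Function.onFun IsCoprime J))
    (I : Ideal R) (hI : I = ⨅ i, J i) [hfin : Module.Finite K (R ⧸ I)] :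
    Module.finrank K (R ⧸ I) = ∑ i, Module.finrank K (R ⧸ J i) := by
  classical
  haveI : ∀ i, Module.Finite K (R ⧸ J i) := fun i =>
    aux_fin_quot (hI ▸ iInf_le J i)
  let e : (R ⧸ I) ≃+* ((i : Fin d) → R ⧸ J i) :=
    (Ideal.quotEquivOfEq hI).trans (Ideal.quotientInfRingEquivPiQuotient J hcop)
  have he_mk : ∀ y, e (Ideal.Quotient.mk I y) = fun i => Ideal.Quotient.mk (J i) y := by
    intro y
    show Ideal.quotientInfToPiQuotient J
      ((Ideal.quotEquivOfEq hI) (Ideal.Quotient.mk I y)) = _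
    rw [Ideal.quotEquivOfEq_mk]
    exact Ideal.quotientInfToPiQuotient_mk J y
  have hsmul : ∀ (c : K) (x), e (c • x) = c • e x := by
    intro c x
    rw [Algebra.smul_def, Algebra.smul_def, map_mul]
    congr 1
  exact (e.toAddEquiv.toLinearEquiv hsmul).finrank_eq.trans (Module.finrank_pi_fintype K)

set_option maxHeartbeats 1000000 in
theorem statement16 (n d : ℕ) (I : Ideal (MvPolynomial (Fin (n + 1)) ℂ))
    (F : Polynomial ℂ) (hsf : Squarefree F)
    (a : Fin n → ℂ) (r : MvPolynomial (Fin (n + 1)) ℂ)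
    (hr : r = X (Fin.last n) + ∑ i : Fin n, C (a i) * X i.castSucc)
    [hfin : Module.Finite ℂ (MvPolynomial (Fin (n + 1)) ℂ ⧸ I)]
    (hd : F.natDegree = d)
    (hdeg : d = Module.finrank ℂ (MvPolynomial (Fin (n + 1)) ℂ ⧸ I))
    (hFr : Polynomial.aeval r F ∈ I)
    (hproper : ∀ H : Polynomial ℂ, H ∣ F → 0 < H.natDegree → H.natDegree < F.natDegree →
      Polynomial.aeval r H ∉ I)
    (μ : Fin d → ℂ) (hμinj : Function.Injective μ)
    (hμeig : ∀ i, Module.End.HasEigenvalue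
      (LinearMap.mulLeft ℂ (Ideal.Quotient.mk I r)) (μ i))
    (hμall : ∀ z : ℂ, Module.End.HasEigenvalue
      (LinearMap.mulLeft ℂ (Ideal.Quotient.mk I r)) z → ∃ i, μ i = z) :
    (∀ z : ℂ, F.IsRoot z ↔ Module.End.HasEigenvalue
      (LinearMap.mulLeft ℂ (Ideal.Quotient.mk I r)) z) ∧
    I = (⨅ i : Fin d, (I ⊔ Ideal.span {r - C (μ i)})) ∧
    ∀ i : Fin d, (I ⊔ Ideal.span {r - C (μ i)}).IsMaximal := by
  classical
  have hFne : F ≠ 0 := hsf.ne_zero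
  set lam : Module.End ℂ (MvPolynomial (Fin (n + 1)) ℂ ⧸ I) :=
    LinearMap.mulLeft ℂ (Ideal.Quotient.mk I r) with hlam
  have hmk : ∀ H : Polynomial ℂ, Polynomial.aeval (Ideal.Quotient.mk I r) H
      = Ideal.Quotient.mk I (Polynomial.aeval r H) := by
    intro H
    simpa [Ideal.Quotient.mkₐ_eq_mk] using
      Polynomial.aeval_algHom_apply (Ideal.Quotient.mkₐ ℂ I) r H
  have hmem : ∀ H : Polynomial ℂ,
      Polynomial.aeval lam H = 0 ↔ Polynomial.aeval r H ∈ I := by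
    intro H
    rw [hlam, aux_aeval_mulLeft, LinearMap.mulLeft_eq_zero_iff, hmk]
    exact Ideal.Quotient.eq_zero_iff_mem
  rcases Nat.eq_zero_or_pos d with hd0 | hdpos
  · subst hd0
    have hsub : Subsingleton (MvPolynomial (Fin (n + 1)) ℂ ⧸ I) :=
      Module.finrank_zero_iff.mp hdeg.symm
    have hIt : I = ⊤ := Ideal.Quotient.subsingleton_iff.mp hsub
    refine ⟨fun z => ⟨fun hz => ?_, fun h => ?_⟩, ?_, fun i => i.elim0⟩
    · exfalso
      have hF : F = Polynomial.C (F.coeff 0) := Polynomial.eq_C_of_natDegree_eq_zero hd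
      have h1 : F.coeff 0 = 0 := by
        have h2 := hz
        rw [Polynomial.IsRoot, hF] at h2
        simpa using h2
      exact hFne (by rw [hF, h1, map_zero])
    · exfalso
      obtain ⟨v, hv⟩ := h.exists_hasEigenvector
      exact hv.2 (Subsingleton.elim v 0)
    · rw [hIt]
      exact (iInf_of_empty _).symm
  · have hfr : 0 < Module.finrank ℂ (MvPolynomial (Fin (n + 1)) ℂ ⧸ I) := hdeg ▸ hdpos
    have hntA : Nontrivial (MvPolynomial (Fin (n + 1)) ℂ ⧸ I) :=
      Module.nontrivial_of_finrank_pos hfr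
    have hint : IsIntegral ℂ lam := IsIntegral.of_finite ℂ lam
    have hm0 : Polynomial.aeval lam (minpoly ℂ lam) = 0 := minpoly.aeval ℂ lam
    have hmrI : Polynomial.aeval r (minpoly ℂ lam) ∈ I := (hmem _).mp hm0
    have hmdvd : minpoly ℂ lam ∣ F := minpoly.dvd ℂ lam ((hmem F).mpr hFr)
    have hmne : minpoly ℂ lam ≠ 0 := minpoly.ne_zero hint
    have hmdeg : (minpoly ℂ lam).natDegree = F.natDegree := by
      rcases lt_trichotomy (minpoly ℂ lam).natDegree F.natDegree with h | h | h
      · rcases Nat.eq_zero_or_pos (minpoly ℂ lam).natDegree with h0 | hpos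
        · exfalso
          have h1 : minpoly ℂ lam = 1 := (minpoly.monic hint).natDegree_eq_zero.mp h0
          rw [h1, map_one] at hm0
          obtain ⟨v, hv⟩ := exists_ne (0 : MvPolynomial (Fin (n + 1)) ℂ ⧸ I)
          have h2 := LinearMap.ext_iff.mp hm0 v
          simp only [Module.End.one_apply, LinearMap.zero_apply] at h2
          exact hv h2
        · exact absurd hmrI (hproper _ hmdvd hpos h)
      · exact h
      · exact absurd h (not_lt.mpr (Polynomial.natDegree_le_of_dvd hmdvd hFne))
    obtain ⟨q, hq⟩ := hmdvd
    have hqne : q ≠ 0 := fun h => hFne (by rw [hq, h, mul_zero])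
    have hqdeg : q.natDegree = 0 := by
      have h2 := Polynomial.natDegree_mul hmne hqne
      rw [← hq, hmdeg] at h2
      omega
    have hqc0 : q.coeff 0 ≠ 0 := by
      intro h
      exact hqne (by rw [Polynomial.eq_C_of_natDegree_eq_zero hqdeg, h, map_zero])
    have part1 : ∀ z : ℂ, F.IsRoot z ↔ Module.End.HasEigenvalue lam z := by
      intro z
      rw [Module.End.hasEigenvalue_iff_isRoot]
      constructor
      · intro hz
        rw [Polynomial.IsRoot, hq, Polynomial.eval_mul] at hz
        rcases mul_eq_zero.mp hz with h | h
        · exact h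
        · exfalso
          rw [Polynomial.eq_C_of_natDegree_eq_zero hqdeg, Polynomial.eval_C] at h
          exact hqc0 h
      · intro hz
        rw [Polynomial.IsRoot, hq, Polynomial.eval_mul, Polynomial.IsRoot.eq_zero hz, zero_mul]
    -- the product polynomial over the eigenvalues
    set M : Multiset ℂ := Finset.univ.val.map μ with hM
    have hMnodup : M.Nodup := Multiset.Nodup.map hμinj Finset.univ.nodup
    have hMle : M ≤ F.roots := by
      rw [Multiset.le_iff_count]
      intro x
      by_cases hx : x ∈ M
      · rw [Multiset.count_eq_one_of_mem hMnodup hx]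
        obtain ⟨i, _, rfl⟩ := Multiset.mem_map.mp hx
        exact Multiset.one_le_count_iff_mem.mpr
          (Polynomial.mem_roots'.mpr ⟨hFne, (part1 _).mpr (hμeig i)⟩)
      · rw [Multiset.count_eq_zero_of_notMem hx]
        exact Nat.zero_le _
    have hPdvd : (M.map fun z => Polynomial.X - Polynomial.C z).prod ∣ F :=
      dvd_trans (Multiset.prod_dvd_prod_of_le (Multiset.map_le_map hMle))
        (Polynomial.prod_multiset_X_sub_C_dvd F)
    have hPmonic : ((M.map fun z => Polynomial.X - Polynomial.C z).prod).Monic :=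
      Polynomial.monic_multiset_prod_of_monic _ _ fun z _ => Polynomial.monic_X_sub_C z
    have hPdeg : ((M.map fun z => Polynomial.X - Polynomial.C z).prod).natDegree = d := by
      rw [Polynomial.natDegree_multiset_prod_of_monic _ (fun f hf => by
        obtain ⟨z, _, rfl⟩ := Multiset.mem_map.mp hf
        exact Polynomial.monic_X_sub_C z)]
      rw [Multiset.map_map]
      have hcongr : Multiset.map (Polynomial.natDegree ∘ fun z => Polynomial.X - Polynomial.C z) M
          = Multiset.map (fun _ => 1) M :=
        Multiset.map_congr rfl fun z _ => Polynomial.natDegree_X_sub_C z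
      rw [hcongr, Multiset.map_const', Multiset.sum_replicate, smul_eq_mul, mul_one, hM,
        Multiset.card_map]
      exact Finset.card_fin d
    obtain ⟨g, hgF⟩ := hPdvd
    have hgne : g ≠ 0 := fun h => hFne (by rw [hgF, h, mul_zero])
    have hgdeg : g.natDegree = 0 := by
      have h2 := Polynomial.natDegree_mul hPmonic.ne_zero hgne
      rw [← hgF, hPdeg, hd] at h2
      omega
    have hgc0 : g.coeff 0 ≠ 0 := by
      intro h
      exact hgne (by rw [Polynomial.eq_C_of_natDegree_eq_zero hgdeg, h, map_zero])
    have hPrI : Polynomial.aeval r ((M.map fun z => Polynomial.X - Polynomial.C z).prod) ∈ I := by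
      have h3 : Polynomial.aeval r F
          = Polynomial.aeval r ((M.map fun z => Polynomial.X - Polynomial.C z).prod)
            * MvPolynomial.C (g.coeff 0) := by
        conv_lhs => rw [hgF, Polynomial.eq_C_of_natDegree_eq_zero hgdeg]
        rw [map_mul, Polynomial.aeval_C, MvPolynomial.algebraMap_eq]
      have h4 : Polynomial.aeval r ((M.map fun z => Polynomial.X - Polynomial.C z).prod)
          = MvPolynomial.C (g.coeff 0)⁻¹ * Polynomial.aeval r F := by
        rw [h3, mul_comm _ (MvPolynomial.C (g.coeff 0)), ← mul_assoc, ← map_mul,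
          inv_mul_cancel₀ hgc0, map_one, one_mul]
      rw [h4]
      exact Ideal.mul_mem_left I _ hFr
    set J : Fin d → Ideal (MvPolynomial (Fin (n + 1)) ℂ) :=
      fun i => I ⊔ Ideal.span {r - MvPolynomial.C (μ i)} with hJ
    have hprod_eq : ∏ i : Fin d, (r - MvPolynomial.C (μ i))
        = Polynomial.aeval r ((M.map fun z => Polynomial.X - Polynomial.C z).prod) := by
      rw [map_multiset_prod, Multiset.map_map, hM, Multiset.map_map]
      rw [Finset.prod_eq_multiset_prod]
      apply congrArg
      apply Multiset.map_congr rfl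
      intro i _
      simp [MvPolynomial.algebraMap_eq]
    have hspan_le : (∏ i : Fin d, Ideal.span {r - MvPolynomial.C (μ i)}) ≤ I := by
      rw [Ideal.prod_span_singleton, Ideal.span_singleton_le_iff_mem, hprod_eq]
      exact hPrI
    have hcop : Pairwise (Function.onFun IsCoprime J) := by
      intro i j hij
      rw [Function.onFun, Ideal.isCoprime_iff_sup_eq, Ideal.eq_top_iff_one]
      have hi : r - MvPolynomial.C (μ i) ∈ J i ⊔ J j :=
        Ideal.mem_sup_left (Ideal.mem_sup_right (Ideal.subset_span (Set.mem_singleton _)))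
      have hjm : r - MvPolynomial.C (μ j) ∈ J i ⊔ J j :=
        Ideal.mem_sup_right (Ideal.mem_sup_right (Ideal.subset_span (Set.mem_singleton _)))
      have hsub : MvPolynomial.C (μ i - μ j) ∈ J i ⊔ J j := by
        have h5 := Submodule.sub_mem _ hjm hi
        have h6 : (r - MvPolynomial.C (μ j)) - (r - MvPolynomial.C (μ i))
            = MvPolynomial.C (μ i - μ j) := by
          rw [map_sub]
          ring
        rwa [h6] at h5
      have h7 : μ i - μ j ≠ 0 := sub_ne_zero_of_ne fun h => hij (hμinj h)
      have h8 := Ideal.mul_mem_left _ (MvPolynomial.C (μ i - μ j)⁻¹) hsub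
      rwa [← map_mul, inv_mul_cancel₀ h7, map_one] at h8
    have hprodJ_le : (∏ i : Fin d, J i) ≤ I :=
      le_trans (aux_prod_sup_le Finset.univ I _) (sup_le le_rfl hspan_le)
    have hinf_eq : (⨅ i : Fin d, J i) = ∏ i : Fin d, J i := by
      rw [← aux_inf_eq_prod Finset.univ J (fun i _ j _ hij => hcop hij)]
      simp [Finset.inf_eq_iInf]
    have part2 : I = ⨅ i : Fin d, J i :=
      le_antisymm (le_iInf fun i => le_sup_left) (by rw [hinf_eq]; exact hprodJ_le)
    -- maximality
    have hJne : ∀ i, J i ≠ ⊤ := by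
      intro i hTop
      obtain ⟨v, hv⟩ := (hμeig i).exists_hasEigenvector
      have h1 : Ideal.Quotient.mk I r * v = μ i • v := by
        have h := hv.apply_eq_smul
        rw [hlam] at h
        simpa [LinearMap.mulLeft_apply] using h
      have h2 : Ideal.Quotient.mk I (MvPolynomial.C (μ i)) * v = μ i • v := by
        rw [aux_smul_mk I (μ i) v, MvPolynomial.algebraMap_eq]
      have hv0 : Ideal.Quotient.mk I (r - MvPolynomial.C (μ i)) * v = 0 := by
        rw [map_sub, sub_mul, h1, h2, sub_self]
      have honem : (1 : MvPolynomial (Fin (n + 1)) ℂ) ∈ J i := hTop ▸ Submodule.mem_top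
      obtain ⟨g1, hg1, h1', hh1, hgh⟩ := Submodule.mem_sup.mp honem
      obtain ⟨q1, hq1⟩ := Ideal.mem_span_singleton'.mp hh1
      have hveq : v = 0 := by
        calc v = Ideal.Quotient.mk I 1 * v := by rw [map_one, one_mul]
        _ = Ideal.Quotient.mk I (g1 + h1') * v := by rw [hgh]
        _ = Ideal.Quotient.mk I h1' * v := by
            rw [map_add, add_mul, Ideal.Quotient.eq_zero_iff_mem.mpr hg1, zero_mul, zero_add]
        _ = Ideal.Quotient.mk I q1 * (Ideal.Quotient.mk I (r - MvPolynomial.C (μ i)) * v) := by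
            rw [← hq1, map_mul, mul_assoc]
        _ = 0 := by rw [hv0, mul_zero]
      exact hv.2 hveq
    have hJfin : ∀ i, Module.Finite ℂ (MvPolynomial (Fin (n + 1)) ℂ ⧸ J i) := fun i =>
      aux_fin_quot (le_sup_left : I ≤ J i)
    have hJnt : ∀ i, Nontrivial (MvPolynomial (Fin (n + 1)) ℂ ⧸ J i) := fun i =>
      not_subsingleton_iff_nontrivial.mp fun h => hJne i (Ideal.Quotient.subsingleton_iff.mp h)
    have hsum : ∑ i, Module.finrank ℂ (MvPolynomial (Fin (n + 1)) ℂ ⧸ J i) = d := by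
      haveI := hJfin
      rw [← aux_crt_finrank J hcop I part2, ← hdeg]
    have hone1 : ∀ i, Module.finrank ℂ (MvPolynomial (Fin (n + 1)) ℂ ⧸ J i) = 1 := by
      have hge : ∀ i : Fin d, 1 ≤ Module.finrank ℂ (MvPolynomial (Fin (n + 1)) ℂ ⧸ J i) := by
        intro i
        haveI := hJfin i
        haveI := hJnt i
        exact Module.finrank_pos
      by_contra hcon
      push_neg at hcon
      obtain ⟨i0, hi0⟩ := hcon
      have hlt : 1 < Module.finrank ℂ (MvPolynomial (Fin (n + 1)) ℂ ⧸ J i0) :=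
        lt_of_le_of_ne (hge i0) (Ne.symm hi0)
      have hdd : (d : ℕ) < d := by
        calc d = ∑ _i : Fin d, 1 := by simp
        _ < ∑ i, Module.finrank ℂ (MvPolynomial (Fin (n + 1)) ℂ ⧸ J i) :=
            Finset.sum_lt_sum (fun i _ => hge i) ⟨i0, Finset.mem_univ _, hlt⟩
        _ = d := hsum
      omega
    refine ⟨part1, part2, fun i => ?_⟩
    apply Ideal.Quotient.maximal_of_isField
    haveI := hJfin i
    haveI := hJnt i
    have hrep := (finrank_eq_one_iff_of_nonzero'
      (1 : MvPolynomial (Fin (n + 1)) ℂ ⧸ J i) one_ne_zero).mp (hone1 i)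
    refine ⟨exists_pair_ne _, mul_comm, ?_⟩
    intro x hx
    obtain ⟨c, hc⟩ := hrep x
    have hcne : c ≠ 0 := fun h => hx (by rw [← hc, h, zero_smul])
    refine ⟨c⁻¹ • 1, ?_⟩
    rw [← hc, smul_mul_smul_comm, mul_one, mul_inv_cancel₀ hcne, one_smul]
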